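/- Let R be a ℚ-algebra and B = R⟨V₁,…,V_d⟩ a polynomial ring (or suitable completion) over R with commuting derivations ∂/∂Vᵢ, and let M be a finite projective B-module with integrable nilpotent connection ∇ extending d. Then the de Rham complex DR(M, ∇) is quasi-isomorphic to the flat sections M^{∇=0} placed in degree 0; in particular H⁰(DR(M,∇)) = M^{∇=0} and H^i(DR(M,∇)) = 0 for i > 0. -/

import Mathlib

open MvPolynomial

section Koszul
set_option linter.unusedSectionVars false

variable {ι : Type*} [LinearOrder ι] [DecidableEq ι] {M : Type*} [AddCommGroup M]

/-- The sign `(-1)^#{j ∈ s : j < x}`. -/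
def kSgn (x : ι) (s : Finset ι) : ℤ := (-1) ^ ((s.filter (fun j => j < x)).card)

/-- The Koszul differential on functions on all finsets. -/
noncomputable def kD (D : ι → M →+ M) (f : Finset ι → M) : Finset ι → M :=
  fun s => ∑ i ∈ s, kSgn i s • D i (f (s.erase i))

lemma kSgn_sq (x : ι) (s : Finset ι) : kSgn x s * kSgn x s = 1 := by
  rw [kSgn, ← pow_add, ← two_mul, pow_mul]
  norm_num

lemma kSgn_smul_kSgn_smul (x : ι) (s : Finset ι) (m : M) :
    kSgn x s • kSgn x s • m = m := by
  rw [smul_smul, kSgn_sq, one_smul]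

lemma kSgn_erase_self (x : ι) (s : Finset ι) : kSgn x (s.erase x) = kSgn x s := by
  unfold kSgn
  rw [Finset.filter_erase, Finset.erase_eq_of_notMem]
  simp

lemma kSgn_insert_self (x : ι) (s : Finset ι) : kSgn x (insert x s) = kSgn x s := by
  unfold kSgn
  rw [Finset.filter_insert, if_neg (lt_irrefl x)]

lemma kSgn_cross {a i : ι} {s : Finset ι} (ha : a ∉ s) (hi : i ∈ s) :
    kSgn i s * kSgn a (s.erase i) = -(kSgn a s * kSgn i (insert a s)) := by
  have hne : i ≠ a := fun h => ha (h ▸ hi)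
  unfold kSgn
  rw [Finset.filter_erase, Finset.filter_insert]
  rcases hne.lt_or_gt with h | h
  · -- i < a
    rw [if_neg (asymm h)]
    have hmem : i ∈ s.filter (fun j => j < a) := Finset.mem_filter.mpr ⟨hi, h⟩
    rw [← Finset.card_erase_add_one hmem, pow_succ]
    ring
  · -- a < i
    rw [if_pos h, Finset.erase_eq_of_notMem (by
      simp only [Finset.mem_filter]; exact fun hc => absurd hc.2 (asymm h))]
    rw [Finset.card_insert_of_notMem (by
      simp only [Finset.mem_filter]; exact fun hc => ha hc.1), pow_succ]
    ring

/-- The homotopy operator in the variable `a`. -/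
noncomputable def kK (I : ι → M →+ M) (a : ι) (f : Finset ι → M) : Finset ι → M :=
  fun t => if a ∈ t then 0 else kSgn a t • I a (f (insert a t))

lemma kD_add (D : ι → M →+ M) (u v : Finset ι → M) (s : Finset ι) :
    kD D (fun t => u t + v t) s = kD D u s + kD D v s := by
  unfold kD
  rw [← Finset.sum_add_distrib]
  exact Finset.sum_congr rfl fun i _ => by rw [map_add, smul_add]

lemma kD_kK_mem (D I : ι → M →+ M) (h1 : ∀ a m, D a (I a m) = m)
    {a : ι} {s : Finset ι} (ha : a ∈ s) (f : Finset ι → M) :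
    kD D (kK I a f) s = f s := by
  unfold kD
  rw [Finset.sum_eq_single_of_mem a ha]
  · rw [kK, if_neg (Finset.notMem_erase a s), kSgn_erase_self,
      Finset.insert_erase ha, map_zsmul, h1, kSgn_smul_kSgn_smul]
  · intro i hi hne
    rw [kK, if_pos (Finset.mem_erase.mpr ⟨fun h => hne h.symm, ha⟩), map_zero, smul_zero]

lemma kD_kK_not_mem (D I : ι → M →+ M)
    (h2 : ∀ a b, b ≠ a → ∀ m : M, D b (I a m) = I a (D b m))
    {a : ι} {s : Finset ι} (ha : a ∉ s) (f : Finset ι → M)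
    (hcl : kD D f (insert a s) = 0) :
    kD D (kK I a f) s = I a (D a (f s)) := by
  have hane : ∀ i ∈ s, i ≠ a := fun i hi h => ha (h ▸ hi)
  have expand : kD D (kK I a f) s
      = ∑ i ∈ s, (-(kSgn a s * kSgn i (insert a s))) • I a (D i (f (insert a (s.erase i)))) := by
    unfold kD
    refine Finset.sum_congr rfl fun i hi => ?_
    have hai : a ∉ s.erase i := fun h => ha (Finset.mem_of_mem_erase h)
    rw [kK, if_neg hai, map_zsmul, h2 a i (hane i hi), smul_smul, kSgn_cross ha hi]
  have h0 : kSgn a s • D a (f s)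
      + ∑ i ∈ s, kSgn i (insert a s) • D i (f ((insert a s).erase i)) = 0 := by
    have hcl' := hcl
    rw [kD] at hcl'
    rw [← hcl', Finset.sum_insert ha, kSgn_insert_self, Finset.erase_insert ha]
  have h0' : D a (f s) = kSgn a s •
      (- ∑ i ∈ s, kSgn i (insert a s) • D i (f ((insert a s).erase i))) := by
    have h1' := eq_neg_of_add_eq_zero_left h0
    calc D a (f s) = kSgn a s • (kSgn a s • D a (f s)) := (kSgn_smul_kSgn_smul _ _ _).symm
    _ = _ := by rw [h1']
  rw [expand, h0', map_zsmul, map_neg, map_sum, smul_neg, Finset.smul_sum,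
    ← Finset.sum_neg_distrib]
  refine Finset.sum_congr rfl fun i hi => ?_
  rw [Finset.erase_insert_of_ne (hane i hi).symm, map_zsmul, smul_smul, neg_smul]

lemma kD_eq_zero_of_hom (D : ι → M →+ M) (f : Finset ι → M) (k : ℕ)
    (hf : ∀ s, s.card ≠ k → f s = 0) {s : Finset ι} (hs : s.card ≠ k + 1) :
    kD D f s = 0 :=
  Finset.sum_eq_zero fun i hi => by
    rw [hf _ (fun h => hs (by rw [← Finset.card_erase_add_one hi, h])), map_zero, smul_zero]

theorem koszul_aux (D I : ι → M →+ M)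
    (h1 : ∀ a m, D a (I a m) = m)
    (h2 : ∀ a b, b ≠ a → ∀ m : M, D b (I a m) = I a (D b m))
    (h3 : ∀ a b (m : M), D a (D b m) = D b (D a m))
    (k : ℕ) (A : Finset ι) :
    ∀ f : Finset ι → M, (∀ s, s.card ≠ k + 1 → f s = 0) →
    (∀ s, kD D f s = 0) → (∀ s, ¬ s ⊆ A → f s = 0) →
    (∀ b, b ∉ A → ∀ s, D b (f s) = 0) →
    ∃ g : Finset ι → M, (∀ s, s.card ≠ k → g s = 0) ∧
      (∀ s, ¬ s ⊆ A → g s = 0) ∧ (∀ b, b ∉ A → ∀ s, D b (g s) = 0) ∧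
      (∀ s, kD D g s = f s) := by
  induction A using Finset.induction_on with
  | empty =>
    intro f hhom hcl hsupp hflat
    have hf0 : ∀ s, f s = 0 := by
      intro s
      rcases eq_or_ne s ∅ with rfl | hne
      · exact hhom ∅ (by simp)
      · exact hsupp s (fun h => hne (Finset.subset_empty.mp h))
    refine ⟨fun _ => 0, fun _ _ => rfl, fun _ _ => rfl, fun _ _ _ => map_zero _, fun s => ?_⟩
    rw [hf0]
    exact Finset.sum_eq_zero fun i _ => by rw [map_zero, smul_zero]
  | @insert a A' ha IH =>
    intro f hhom hcl hsupp hflat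
    set f' : Finset ι → M := fun s => if a ∈ s then 0 else f s - I a (D a (f s)) with hf'def
    have hf'mem : ∀ s, a ∈ s → f' s = 0 := fun s hs => if_pos hs
    have hf'not : ∀ s, a ∉ s → f' s = f s - I a (D a (f s)) := fun s hs => if_neg hs
    -- the key homotopy identity : kD (kK f) = f - f'
    have hKey : ∀ s, kD D (kK I a f) s = f s - f' s := by
      intro s
      by_cases hs : a ∈ s
      · rw [kD_kK_mem D I h1 hs, hf'mem s hs, sub_zero]
      · rw [kD_kK_not_mem D I h2 hs f (hcl _), hf'not s hs]
        abel
    have hf'hom : ∀ s, s.card ≠ k + 1 → f' s = 0 := by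
      intro s hs
      by_cases h : a ∈ s
      · exact hf'mem s h
      · rw [hf'not s h, hhom s hs, map_zero, map_zero, sub_zero]
    have hf'cl : ∀ s, kD D f' s = 0 := by
      intro t
      by_cases hat : a ∈ t
      · refine Finset.sum_eq_zero fun i hi => ?_
        rcases eq_or_ne i a with rfl | hia
        · have hnm : i ∉ t.erase i := Finset.notMem_erase i t
          rw [hf'not _ hnm, map_sub, h1, sub_self, smul_zero]
        · have hm : a ∈ t.erase i := Finset.mem_erase.mpr ⟨fun h => hia h.symm, hat⟩
          rw [hf'mem _ hm, map_zero, smul_zero]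
      · have step : ∀ i ∈ t, kSgn i t • D i (f' (t.erase i))
            = kSgn i t • D i (f (t.erase i))
              - kSgn i t • I a (D a (D i (f (t.erase i)))) := by
          intro i hi
          have hia : i ≠ a := fun h => hat (h ▸ hi)
          have hnm : a ∉ t.erase i := fun h => hat (Finset.mem_of_mem_erase h)
          rw [hf'not _ hnm, map_sub, h2 a i hia, h3 i a, smul_sub]
        have hsum : ∑ i ∈ t, kSgn i t • I a (D a (D i (f (t.erase i))))
            = I a (D a (kD D f t)) := by
          rw [kD, map_sum, map_sum]
          exact Finset.sum_congr rfl fun i _ => by rw [map_zsmul, map_zsmul]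
        calc kD D f' t = ∑ i ∈ t, (kSgn i t • D i (f (t.erase i))
              - kSgn i t • I a (D a (D i (f (t.erase i))))) :=
            Finset.sum_congr rfl step
          _ = kD D f t - I a (D a (kD D f t)) := by
            rw [Finset.sum_sub_distrib, hsum]; rfl
          _ = 0 := by rw [hcl t, map_zero, map_zero, sub_zero]
    have hf'supp : ∀ s, ¬ s ⊆ A' → f' s = 0 := by
      intro s hsA
      by_cases h : a ∈ s
      · exact hf'mem s h
      · have : ¬ s ⊆ insert a A' := fun hsub =>
          hsA ((Finset.subset_insert_iff_of_notMem h).mp hsub)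
        rw [hf'not s h, hsupp s this, map_zero, map_zero, sub_zero]
    have hf'flat : ∀ b, b ∉ A' → ∀ s, D b (f' s) = 0 := by
      intro b hb s
      by_cases h : a ∈ s
      · rw [hf'mem s h, map_zero]
      · rw [hf'not s h, map_sub]
        rcases eq_or_ne b a with rfl | hba
        · rw [h1, sub_self]
        · have hbA : b ∉ insert a A' := by
            simp only [Finset.mem_insert]
            exact fun hc => hc.elim hba hb
          rw [h2 a b hba, ← h3 a b, hflat b hbA s]
          simp
    obtain ⟨g', hg'hom, hg'supp, hg'flat, hg'd⟩ := IH f' hf'hom hf'cl hf'supp hf'flat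
    refine ⟨fun s => kK I a f s + g' s, ?_, ?_, ?_, ?_⟩
    · intro s hs
      dsimp only
      rw [hg'hom s hs, add_zero]
      by_cases h : a ∈ s
      · exact if_pos h
      · have hc : (insert a s).card ≠ k + 1 := by
          rw [Finset.card_insert_of_notMem h]
          omega
        rw [kK, if_neg h, hhom _ hc, map_zero, smul_zero]
    · intro s hsA
      have hsA' : ¬ s ⊆ A' := fun h => hsA (h.trans (Finset.subset_insert a A'))
      dsimp only
      rw [hg'supp s hsA', add_zero]
      by_cases h : a ∈ s
      · exact if_pos h
      · have : ¬ insert a s ⊆ insert a A' := fun hsub =>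
          hsA ((Finset.subset_insert a s).trans hsub)
        rw [kK, if_neg h, hsupp _ this, map_zero, smul_zero]
    · intro b hb s
      have hbA' : b ∉ A' := fun h => hb (Finset.mem_insert_of_mem h)
      have hba : b ≠ a := fun h => hb (h ▸ Finset.mem_insert_self a A')
      dsimp only
      rw [map_add, hg'flat b hbA' s, add_zero]
      by_cases h : a ∈ s
      · rw [kK, if_pos h, map_zero]
      · rw [kK, if_neg h, map_zsmul, h2 a b hba, hflat b hb _, map_zero, smul_zero]
    · intro s
      rw [kD_add, hKey s, hg'd s]
      abel

theorem koszul_exact [Fintype ι] (D I : ι → M →+ M)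
    (h1 : ∀ a m, D a (I a m) = m)
    (h2 : ∀ a b, b ≠ a → ∀ m : M, D b (I a m) = I a (D b m))
    (h3 : ∀ a b (m : M), D a (D b m) = D b (D a m))
    (k : ℕ) (f : Finset ι → M) (hhom : ∀ s, s.card ≠ k + 1 → f s = 0)
    (hcl : ∀ s, kD D f s = 0) :
    ∃ g : Finset ι → M, (∀ s, s.card ≠ k → g s = 0) ∧ (∀ s, kD D g s = f s) := by
  obtain ⟨g, hg1, _, _, hg4⟩ := koszul_aux D I h1 h2 h3 k Finset.univ f hhom hcl
    (fun s hs => absurd (Finset.subset_univ s) hs)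
    (fun b hb => absurd (Finset.mem_univ b) hb)
  exact ⟨g, hg1, hg4⟩

end Koszul

/-- The Koszul-type de Rham differential of a connection `D = (D₁,…,D_d)` on a module
`M`, acting on alternating forms indexed by `k`-element subsets of `{1,…,d}`. -/
noncomputable def connDeRhamD {M : Type*} [AddCommGroup M] {d k : ℕ}
    (D : Fin d → M →+ M)
    (ω : {s : Finset (Fin d) // s.card = k} → M) :
    {s : Finset (Fin d) // s.card = k + 1} → M :=
  fun s => ∑ i ∈ s.1.attach,
    ((-1 : ℤ) ^ ((s.1.filter (fun j => j < i.1)).card)) •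
      D i.1 (ω ⟨s.1.erase i.1, by simp [Finset.card_erase_of_mem i.2, s.2]⟩)

lemma connDeRhamD_eq_kD {M : Type*} [AddCommGroup M] {d k : ℕ}
    (D : Fin d → M →+ M) (ω : {s : Finset (Fin d) // s.card = k} → M)
    {s : Finset (Fin d)} (hs : s.card = k + 1) :
    connDeRhamD D ω ⟨s, hs⟩
      = kD D (fun t => if h : t.card = k then ω ⟨t, h⟩ else 0) s := by
  unfold connDeRhamD kD
  dsimp only
  rw [← Finset.sum_attach s (fun i => kSgn i s • D i
      (if h : (s.erase i).card = k then ω ⟨s.erase i, h⟩ else 0))]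
  refine Finset.sum_congr rfl fun i _ => ?_
  have hcard : (s.erase i.1).card = k := by
    simp [Finset.card_erase_of_mem i.2, hs]
  rw [dif_pos hcard]
  rfl

lemma connDeRhamD_singleton {M : Type*} [AddCommGroup M] {d : ℕ}
    (D : Fin d → M →+ M) (ω : {s : Finset (Fin d) // s.card = 0} → M) (i : Fin d)
    (h : ({i} : Finset (Fin d)).card = 0 + 1) :
    connDeRhamD D ω ⟨{i}, h⟩ = D i (ω ⟨∅, Finset.card_empty⟩) := by
  rw [connDeRhamD_eq_kD D ω h]
  rw [kD, Finset.sum_singleton, Finset.erase_singleton]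
  have h1 : kSgn i ({i} : Finset (Fin d)) = 1 := by
    simp [kSgn, Finset.filter_singleton]
  rw [h1, one_smul, dif_pos Finset.card_empty]

/-- for a finite projective module `M` over `B = R⟨V₁,…,V_d⟩` with an
integrable nilpotent connection `∇`, the de Rham complex `DR(M,∇)` is quasi-isomorphic
to the flat sections `M^{∇=0}` in degree `0`: `H⁰ = M^{∇=0}` and `Hⁱ = 0` for `i > 0`. -/
theorem de_rham_complex_of_nilpotent_connection_quasi_iso
    {R : Type*} [CommRing R] [Algebra ℚ R] (d : ℕ)
    {M : Type*} [AddCommGroup M] [Module (MvPolynomial (Fin d) R) M]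
    [Module.Finite (MvPolynomial (Fin d) R) M]
    [Module.Projective (MvPolynomial (Fin d) R) M]
    (D : Fin d → M →+ M)
    (hleib : ∀ i (f : MvPolynomial (Fin d) R) (m : M),
      D i (f • m) = (MvPolynomial.pderiv i f) • m + f • D i m)
    (hcomm : ∀ i j, (D i).comp (D j) = (D j).comp (D i))
    (hnilp : ∀ (m : M) i, ∃ k, (D i)^[k] m = 0) :
    -- `H⁰(DR(M,∇)) = M^{∇=0}`
    (∀ ω : {s : Finset (Fin d) // s.card = 0} → M,
      connDeRhamD D ω = 0 ↔ ∀ i, D i (ω ⟨∅, Finset.card_empty⟩) = 0) ∧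
    -- `Hⁱ(DR(M,∇)) = 0` for `i > 0`
    (∀ k : ℕ, ∀ ω : {s : Finset (Fin d) // s.card = k + 1} → M,
      connDeRhamD D ω = 0 →
        ∃ η : {s : Finset (Fin d) // s.card = k} → M, connDeRhamD D η = ω) := by
  classical
  have hc : ∀ (i j : Fin d) (m : M), D i (D j m) = D j (D i m) :=
    fun i j m => DFunLike.congr_fun (hcomm i j) m
  constructor
  · -- H⁰
    intro ω
    constructor
    · intro h i
      have h1 := congr_fun h ⟨{i}, by simp⟩
      rw [connDeRhamD_singleton D ω i (by simp)] at h1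
      simpa using h1
    · intro h
      funext sp
      obtain ⟨t, ht⟩ := sp
      obtain ⟨i, rfl⟩ := Finset.card_eq_one.mp ht
      show connDeRhamD D ω ⟨{i}, ht⟩ = 0
      rw [connDeRhamD_singleton D ω i ht]
      exact h i
  · -- Hⁱ, i > 0
    intro k ω hω
    -- basic facts about iterates of the Dᵢ
    have iter_add : ∀ (a : Fin d) (n : ℕ) (x y : M),
        (D a)^[n] (x + y) = (D a)^[n] x + (D a)^[n] y := by
      intro a n
      induction n with
      | zero => intro x y; rfl
      | succ n ih =>
        intro x y
        rw [Function.iterate_succ_apply', Function.iterate_succ_apply',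
          Function.iterate_succ_apply', ih, map_add]
    have iter_zero : ∀ (a : Fin d) (n : ℕ), (D a)^[n] (0 : M) = 0 := by
      intro a n
      induction n with
      | zero => rfl
      | succ n ih => rw [Function.iterate_succ_apply', ih, map_zero]
    have iter_comm : ∀ (a b : Fin d) (n : ℕ) (m : M),
        (D a)^[n] (D b m) = D b ((D a)^[n] m) := by
      intro a b n
      induction n with
      | zero => intro m; rfl
      | succ n ih =>
        intro m
        rw [Function.iterate_succ_apply', Function.iterate_succ_apply', ih, hc]
    have iter_stable : ∀ (a : Fin d) (m : M) (N n : ℕ), N ≤ n →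
        (D a)^[N] m = 0 → (D a)^[n] m = 0 := by
      intro a m N n h hN
      obtain ⟨c, rfl⟩ := Nat.exists_eq_add_of_le h
      rw [add_comm, Function.iterate_add_apply, hN, iter_zero]
    -- the coefficients (-1)^n/(n+1)! ⬝ Vₐ^(n+1) of the integration operator
    set cf : Fin d → ℕ → MvPolynomial (Fin d) R := fun a n =>
      MvPolynomial.C (algebraMap ℚ R ((-1) ^ n / (((n + 1).factorial : ℕ) : ℚ)))
        * MvPolynomial.X a ^ (n + 1) with hcf
    -- partial sums of the integration operator
    set S : Fin d → ℕ → M → M := fun a N m =>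
      ∑ n ∈ Finset.range N, cf a n • (D a)^[n] m with hSdef
    have hS_stable : ∀ (a : Fin d) (m : M) (N N' : ℕ), N ≤ N' →
        (D a)^[N] m = 0 → S a N' m = S a N m := by
      intro a m N N' h hN
      have hsplit : S a N m + ∑ n ∈ Finset.Ico N N', cf a n • (D a)^[n] m
          = S a N' m := by
        rw [hSdef]
        dsimp only
        rw [Finset.range_eq_Ico, Finset.range_eq_Ico]
        exact Finset.sum_Ico_consecutive (fun n => cf a n • (D a)^[n] m) (Nat.zero_le N) h
      rw [← hsplit, Finset.sum_eq_zero (fun n hn => by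
        rw [iter_stable a m N n (Finset.mem_Ico.mp hn).1 hN, smul_zero]), add_zero]
    choose bound hbound using hnilp
    set If : Fin d → M → M := fun a m => S a (bound m a) m with hIf
    have hIspec : ∀ (a : Fin d) (m : M) (N : ℕ), (D a)^[N] m = 0 →
        If a m = S a N m := by
      intro a m N hN
      rcases le_total N (bound m a) with h | h
      · exact hS_stable a m N (bound m a) h hN
      · exact (hS_stable a m (bound m a) N h (hbound m a)).symm
    have hIadd : ∀ (a : Fin d) (x y : M), If a (x + y) = If a x + If a y := by
      intro a x y
      set N := max (bound x a) (bound y a) with hN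
      have hx : (D a)^[N] x = 0 := iter_stable a x _ N (le_max_left _ _) (hbound x a)
      have hy : (D a)^[N] y = 0 := iter_stable a y _ N (le_max_right _ _) (hbound y a)
      have hxy : (D a)^[N] (x + y) = 0 := by rw [iter_add, hx, hy, add_zero]
      rw [hIspec a (x + y) N hxy, hIspec a x N hx, hIspec a y N hy, hSdef]
      dsimp only
      rw [← Finset.sum_add_distrib]
      exact Finset.sum_congr rfl fun n _ => by rw [iter_add, smul_add]
    set I : Fin d → M →+ M := fun a => AddMonoidHom.mk' (If a) (hIadd a) with hIdef
    have hIapp : ∀ (a : Fin d) (m : M), I a m = If a m := fun a m => rfl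
    -- commutation of Dᵦ with scalars killed by ∂ᵦ
    have hDsmul : ∀ (b : Fin d) (p : MvPolynomial (Fin d) R),
        MvPolynomial.pderiv b p = 0 → ∀ m : M, D b (p • m) = p • D b m := by
      intro b p hp m
      rw [hleib, hp, zero_smul, zero_add]
    have hpd_cf_ne : ∀ (a b : Fin d), b ≠ a → ∀ n,
        MvPolynomial.pderiv b (cf a n) = 0 := by
      intro a b hba n
      rw [hcf]
      dsimp only
      rw [MvPolynomial.pderiv_C_mul, MvPolynomial.pderiv_pow,
        MvPolynomial.pderiv_X_of_ne hba.symm]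
      ring
    -- `D b` commutes with `I a` for `b ≠ a`
    have h2 : ∀ (a b : Fin d), b ≠ a → ∀ m : M, D b (I a m) = I a (D b m) := by
      intro a b hba m
      have hN : (D a)^[bound m a] m = 0 := hbound m a
      have hN' : (D a)^[bound m a] (D b m) = 0 := by rw [iter_comm, hN, map_zero]
      rw [hIapp, hIapp, hIspec a (D b m) _ hN', hIspec a m _ hN, hSdef]
      dsimp only
      rw [map_sum]
      exact Finset.sum_congr rfl fun n _ => by
        rw [hDsmul b (cf a n) (hpd_cf_ne a b hba n), iter_comm]
    -- `D a ∘ I a = id`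
    have h1 : ∀ (a : Fin d) (m : M), D a (I a m) = m := by
      intro a m
      have hN : (D a)^[bound m a] m = 0 := hbound m a
      set u : ℕ → M := fun n =>
        (MvPolynomial.C (algebraMap ℚ R ((-1) ^ n / ((n.factorial : ℕ) : ℚ)))
          * MvPolynomial.X a ^ n) • (D a)^[n] m with hu
      have hterm : ∀ n, D a (cf a n • (D a)^[n] m) = u n - u (n + 1) := by
        intro n
        have hpd : MvPolynomial.pderiv a (cf a n)
            = MvPolynomial.C (algebraMap ℚ R ((-1) ^ n / ((n.factorial : ℕ) : ℚ)))
              * MvPolynomial.X a ^ n := by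
          rw [hcf]
          dsimp only
          rw [MvPolynomial.pderiv_C_mul, MvPolynomial.pderiv_pow,
            MvPolynomial.pderiv_X_self, mul_one, Nat.add_sub_cancel, ← mul_assoc]
          congr 1
          rw [← map_natCast (MvPolynomial.C : R →+* MvPolynomial (Fin d) R) (n + 1),
            ← map_mul]
          congr 1
          rw [← map_natCast (algebraMap ℚ R) (n + 1), ← map_mul]
          congr 1
          rw [Nat.factorial_succ]
          have h1 : ((n + 1 : ℕ) : ℚ) ≠ 0 := by positivity
          have h2 : ((n.factorial : ℕ) : ℚ) ≠ 0 := by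
            exact_mod_cast Nat.cast_ne_zero.mpr (Nat.factorial_ne_zero n)
          field_simp
          push_cast
          ring
        have hsecond : cf a n • (D a)^[n + 1] m = - u (n + 1) := by
          rw [hu, hcf]
          dsimp only
          rw [← neg_smul]
          congr 1
          have hq : ((-1 : ℚ) ^ (n + 1) / (((n + 1).factorial : ℕ) : ℚ))
              = -((-1) ^ n / (((n + 1).factorial : ℕ) : ℚ)) := by
            rw [pow_succ]
            ring
          rw [hq, map_neg, map_neg, neg_mul, neg_neg]
        rw [hleib, hpd, ← Function.iterate_succ_apply' (D a) n m, hsecond,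
          sub_eq_add_neg]
      rw [hIapp, hIspec a m _ hN, hSdef]
      dsimp only
      rw [map_sum, Finset.sum_congr rfl (fun n _ => hterm n),
        Finset.sum_range_sub' u (bound m a)]
      rw [hu]
      dsimp only
      rw [hN, smul_zero, sub_zero]
      simp
    -- apply the abstract Koszul exactness theorem
    set f : Finset (Fin d) → M := fun t =>
      if h : t.card = k + 1 then ω ⟨t, h⟩ else 0 with hfdef
    have hfhom : ∀ s, s.card ≠ k + 1 → f s = 0 := fun s hs => dif_neg hs
    have hfcl : ∀ s, kD D f s = 0 := by
      intro s
      by_cases hs : s.card = k + 1 + 1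
      · rw [← connDeRhamD_eq_kD D ω hs, hω]
        rfl
      · exact kD_eq_zero_of_hom D f (k + 1) hfhom hs
    obtain ⟨g, hg1, hg2⟩ := koszul_exact D I h1 h2 hc k f hfhom hfcl
    refine ⟨fun sp => g sp.1, ?_⟩
    funext sp
    obtain ⟨s, hs⟩ := sp
    have hext : (fun t => if h : t.card = k then g t else 0) = g := by
      funext t
      by_cases h : t.card = k
      · rw [dif_pos h]
      · rw [dif_neg h, hg1 t h]
    calc connDeRhamD D (fun sp => g sp.1) ⟨s, hs⟩
        = kD D (fun t => if h : t.card = k then g t else 0) s :=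
          connDeRhamD_eq_kD D (fun sp => g sp.1) hs
      _ = kD D g s := by rw [hext]
      _ = f s := hg2 s
      _ = ω ⟨s, hs⟩ := dif_pos hs
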